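/- The forward-lifted TSP-optimality cut x(A(P)) + x(∪_{h=1}^{p-1} Δ⁺_h(P)) ≤ |A(P)| - 1 is valid for every feasible solution of F-CVRP-TSP, where Δ⁺_h(P) = Δ^{E,+}_h(P) ∪ Δ^{TSP,+}_h(P) ∪ Δ^{Q,+}_h(P), and P is any TSP-violating path with no depot as intermediate node. -/

import Mathlib

variable {V : Type*}

/-- The list of arcs (consecutive node pairs) of a node list. -/
def arcsOf (l : List V) : List (V × V) := l.zip l.tail

/-- The length of a path given as a node list: the sum of its arc distances. -/
def plen (d : V → V → ℝ) (l : List V) : ℝ :=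
  ((arcsOf l).map (fun a => d a.1 a.2)).sum

@[simp] lemma arcsOf_nil : arcsOf ([] : List V) = [] := rfl
@[simp] lemma arcsOf_single (a : V) : arcsOf [a] = [] := rfl
@[simp] lemma arcsOf_cons_cons (a b : V) (l : List V) :
    arcsOf (a :: b :: l) = (a, b) :: arcsOf (b :: l) := rfl

lemma map_fst_arcsOf (l : List V) : (arcsOf l).map Prod.fst = l.dropLast := by
  induction l with
  | nil => rfl
  | cons a t ih =>
    cases t with
    | nil => rfl
    | cons b t' => simp only [arcsOf_cons_cons, List.map_cons, ih]; rfl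

lemma map_snd_arcsOf (l : List V) : (arcsOf l).map Prod.snd = l.tail := by
  induction l with
  | nil => rfl
  | cons a t ih =>
    cases t with
    | nil => rfl
    | cons b t' => simp only [arcsOf_cons_cons, List.map_cons, ih]; rfl

lemma mem_arcsOf_iff_infix {x y : V} {l : List V} :
    (x, y) ∈ arcsOf l ↔ [x, y] <:+: l := by
  induction l with
  | nil => simp [List.infix_iff_prefix_suffix]
  | cons a t ih =>
    cases t with
    | nil =>
      simp only [arcsOf_single, List.not_mem_nil, false_iff]
      intro h
      have := h.length_le
      simp at this
    | cons b t' =>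
      rw [arcsOf_cons_cons, List.mem_cons, ih]
      constructor
      · rintro (h | h)
        · rw [Prod.mk.injEq] at h
          obtain ⟨rfl, rfl⟩ := h
          exact ⟨[], t', rfl⟩
        · exact List.infix_cons h
      · intro h
        rcases List.infix_cons_iff.mp h with h | h
        · obtain ⟨r, hr⟩ := h
          simp only [List.cons_append, List.cons.injEq] at hr
          obtain ⟨rfl, rfl, -⟩ := hr
          exact Or.inl rfl
        · exact Or.inr h

@[simp] lemma plen_nil (d : V → V → ℝ) : plen d ([] : List V) = 0 := rfl
@[simp] lemma plen_single (d : V → V → ℝ) (a : V) : plen d [a] = 0 := rfl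
lemma plen_cons_cons (d : V → V → ℝ) (a b : V) (l : List V) :
    plen d (a :: b :: l) = d a b + plen d (b :: l) := by
  simp [plen]

/-- junction cost -/
def jn (d : V → V → ℝ) : Option V → Option V → ℝ
  | some x, some y => d x y
  | _, _ => 0

@[simp] lemma jn_none_left (d : V → V → ℝ) (o : Option V) : jn d none o = 0 := rfl
@[simp] lemma jn_none_right (d : V → V → ℝ) (o : Option V) : jn d o none = by exact 0 := by
  cases o <;> rfl
@[simp] lemma jn_some_some (d : V → V → ℝ) (x y : V) : jn d (some x) (some y) = d x y := rfl

lemma plen_cons (d : V → V → ℝ) (a : V) (l : List V) :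
    plen d (a :: l) = jn d (some a) l.head? + plen d l := by
  cases l with
  | nil => simp
  | cons b t => rw [plen_cons_cons]; rfl

lemma plen_append (d : V → V → ℝ) (l₁ l₂ : List V) :
    plen d (l₁ ++ l₂) = plen d l₁ + jn d l₁.getLast? l₂.head? + plen d l₂ := by
  induction l₁ with
  | nil => simp
  | cons a t ih =>
    cases t with
    | nil => simp [plen_cons]
    | cons b t' =>
      rw [List.cons_append, List.cons_append, plen_cons_cons, ← List.cons_append,
        ih, plen_cons_cons]
      simp only [List.getLast?_cons_cons]
      ring

/-- A path is TSP-violating if some path on the same node set with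
the same endpoints is strictly shorter. -/
def TSPviolating (d : V → V → ℝ) (P : List V) : Prop :=
  ∃ Q : List V, Q.Perm P ∧ Q.head? = P.head? ∧ Q.getLast? = P.getLast? ∧
    plen d Q < plen d P

/-- Length of the route visiting customers `c` in order,
starting and ending at the depot. -/
def routeLen (d : V → V → ℝ) (depot : V) (c : List V) : ℝ :=
  plen d (depot :: c ++ [depot])

/-- A route (given by its ordered customer list) is TSP-optimal:
no reordering of its customers gives a strictly shorter route. -/
def TSPopt (d : V → V → ℝ) (depot : V) (c : List V) : Prop :=
  ∀ c' : List V, c'.Perm c → routeLen d depot c ≤ routeLen d depot c'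

lemma decomp {l : List V} {x y : V} (hh : l.head? = some x) (hl : l.getLast? = some y)
    (hlen : 2 ≤ l.length) : ∃ m, l = x :: m ++ [y] := by
  cases l with
  | nil => simp at hh
  | cons a t =>
    cases t with
    | nil => simp at hlen
    | cons b t' =>
      obtain rfl : a = x := by simpa using hh
      have hne : (b :: t') ≠ [] := by simp
      refine ⟨(b :: t').dropLast, ?_⟩
      have h1 : (b :: t').getLast hne = y := by
        rw [List.getLast?_cons_cons, List.getLast?_eq_getLast hne] at hl
        exact Option.some_inj.mp hl
      rw [← h1]
      exact congrArg (List.cons _) (List.dropLast_append_getLast hne).symm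

lemma pair_not_viol (d : V → V → ℝ) (x y : V) : ¬ TSPviolating d [x, y] := by
  rintro ⟨q, hperm, hh, hl, hlt⟩
  have hq : q = [x, y] := by
    cases q with
    | nil => simp [List.head?] at hh
    | cons a t =>
      obtain rfl : a = x := by simpa using hh
      have := hperm.cons_inv
      rw [List.perm_singleton] at this
      rw [this]
  rw [hq] at hlt
  exact lt_irrefl _ hlt

lemma not_viol_of_infix (d : V → V → ℝ) (depot : V) (c : List V)
    (hopt : TSPopt d depot c) {s : List V} (hinf : s <:+: depot :: c ++ [depot]) :
    ¬ TSPviolating d s := by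
  rintro ⟨q, hperm, hh, hl, hlt⟩
  obtain ⟨l₁, l₂, htour⟩ := hinf
  set tour : List V := depot :: c ++ [depot] with htourdef
  set tour' : List V := l₁ ++ q ++ l₂ with htour'def
  have hh' : tour'.head? = tour.head? := by
    rw [← htour]; simp only [htour'def, List.head?_append, hh]
  have hl' : tour'.getLast? = tour.getLast? := by
    rw [← htour]; simp only [htour'def, List.getLast?_append, hl]
  have hlen' : tour'.length = tour.length := by
    rw [← htour]; simp [htour'def, hperm.length_eq]
  have hplen : plen d tour' < plen d tour := by
    rw [← htour]
    simp only [htour'def, plen_append, List.getLast?_append, List.head?_append, hh, hl]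
    linarith
  have hth : tour.head? = some depot := rfl
  have htlast : tour.getLast? = some depot := by
    rw [htourdef, show depot :: c ++ [depot] = (depot :: c) ++ [depot] from rfl,
      List.getLast?_concat]
  have htlen : 2 ≤ tour.length := by
    simp only [htourdef, List.length_cons, List.length_append, List.length_singleton]
    omega
  obtain ⟨m, hm⟩ := decomp (l := tour') (x := depot) (y := depot)
    (by rw [hh']; exact hth) (by rw [hl']; exact htlast) (by rw [hlen']; exact htlen)
  have hperm2 : tour'.Perm tour := by
    rw [← htour, htour'def]
    exact (hperm.append_left l₁).append_right l₂
  rw [hm] at hperm2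
  have hmc : m.Perm c :=
    (List.perm_append_right_iff [depot]).mp hperm2.cons_inv
  have hle := hopt m hmc
  rw [routeLen, routeLen, ← htourdef, ← hm] at hle
  exact absurd hplen (not_lt.mpr hle)

section counting
variable {α : Type*} {β : Type*} [DecidableEq α]

lemma le_sum_of_mem {l : List β} {f : β → ℤ} (hf : ∀ x ∈ l, 0 ≤ f x) {c : β}
    (hc : c ∈ l) : f c ≤ (l.map f).sum := by
  apply List.single_le_sum (l := l.map f)
  · intro x hx
    obtain ⟨y, hy, rfl⟩ := List.mem_map.mp hx
    exact hf y hy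
  · exact List.mem_map_of_mem hc

lemma two_le_sum {l : List β} {f : β → ℤ} (hf : ∀ x ∈ l, 0 ≤ f x) {c c' : β}
    (hc : c ∈ l) (hc' : c' ∈ l) (hne : c ≠ c') : f c + f c' ≤ (l.map f).sum := by
  induction l with
  | nil => simp at hc
  | cons a t ih =>
    rcases List.mem_cons.mp hc with rfl | hc2
    · have hc'2 : c' ∈ t := by
        rcases List.mem_cons.mp hc' with h | h
        · exact absurd h.symm hne
        · exact h
      simp only [List.map_cons, List.sum_cons]
      exact add_le_add le_rfl (le_sum_of_mem (fun x hx => hf x (List.mem_cons_of_mem _ hx)) hc'2)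
    · rcases List.mem_cons.mp hc' with rfl | hc'2
      · simp only [List.map_cons, List.sum_cons]
        rw [add_comm (f c)]
        exact add_le_add le_rfl (le_sum_of_mem (fun x hx => hf x (List.mem_cons_of_mem _ hx)) hc2)
      · simp only [List.map_cons, List.sum_cons]
        have := ih (fun x hx => hf x (List.mem_cons_of_mem _ hx)) hc2 hc'2
        have h0 : 0 ≤ f a := hf a List.mem_cons_self
        linarith

lemma exists_one_le_of_sum_pos {l : List β} {f : β → ℤ} (hf : ∀ x ∈ l, 0 ≤ f x)
    (h : 1 ≤ (l.map f).sum) : ∃ c ∈ l, 1 ≤ f c := by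
  by_contra hcon
  push_neg at hcon
  have hb : (l.map f).sum ≤ 0 := by
    have := List.sum_le_card_nsmul (l.map f) 0 (by
      intro x hx
      obtain ⟨y, hy, rfl⟩ := List.mem_map.mp hx
      have := hcon y hy
      omega)
    simpa using this
  omega

lemma sum_finset_list_swap (s : Finset α) (l : List β) (f : α → β → ℤ) :
    ∑ a ∈ s, (l.map (f a)).sum = (l.map (fun c => ∑ a ∈ s, f a c)).sum := by
  induction l with
  | nil => simp
  | cons b t ih => simp [Finset.sum_add_distrib, ih]

lemma sum_count_eq {α : Type*} [BEq α] [LawfulBEq α] [DecidableEq α] (A : List α) (s : Finset α) :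
    ∑ a ∈ s, (A.count a : ℤ) = (A.countP (fun x => decide (x ∈ s)) : ℤ) := by
  induction A with
  | nil => simp
  | cons x A ih =>
    simp only [List.count_cons, List.countP_cons]
    push_cast
    rw [Finset.sum_add_distrib, ih]
    congr 1
    rw [show (∑ a ∈ s, (if (x == a) = true then (1:ℤ) else 0)) =
      ∑ a ∈ s, (if x = a then (1:ℤ) else 0) by
        apply Finset.sum_congr rfl; intro a _; simp [beq_iff_eq]]
    rw [Finset.sum_ite_eq]
    by_cases hx : x ∈ s <;> simp [hx]

lemma countP_fst_eq_count {α β : Type*} [BEq α] [LawfulBEq α] [DecidableEq α] {x : α}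
    (A : List (α × β)) :
    A.countP (fun a => decide (a.1 = x)) = (A.map Prod.fst).count x := by
  rw [List.count_eq_countP, List.countP_map]
  apply List.countP_congr
  intro a _
  simp [Function.comp, beq_iff_eq]

lemma countP_snd_eq_count {α β : Type*} [BEq β] [LawfulBEq β] [DecidableEq β] {x : β}
    (A : List (α × β)) :
    A.countP (fun a => decide (a.2 = x)) = (A.map Prod.snd).count x := by
  rw [List.count_eq_countP, List.countP_map]
  apply List.countP_congr
  intro a _
  simp [Function.comp, beq_iff_eq]

end counting

section routes
variable [DecidableEq V]

lemma count_tour (depot : V) (c : List V) {x : V} (hx : x ≠ depot) :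
    (depot :: c ++ [depot]).count x = c.count x := by
  have h1 : (depot == x) = false := by simp [beq_iff_eq]; exact fun h => hx h.symm
  simp [List.count_cons, List.count_append, h1]

lemma eq_of_append_cons_eq {x : V} :
    ∀ {a₁ a₂ b₁ b₂ : List V}, a₁ ++ x :: b₁ = a₂ ++ x :: b₂ → x ∉ a₁ → x ∉ a₂ →
      a₁ = a₂ ∧ b₁ = b₂ := by
  intro a₁
  induction a₁ with
  | nil =>
    intro a₂ b₁ b₂ heq h1 h2
    cases a₂ with
    | nil => simpa using heq
    | cons z t =>
      simp only [List.nil_append, List.cons_append, List.cons.injEq] at heq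
      exact absurd (heq.1 ▸ (List.mem_cons_self : z ∈ z :: t)) h2
  | cons z t ih =>
    intro a₂ b₁ b₂ heq h1 h2
    cases a₂ with
    | nil =>
      simp only [List.nil_append, List.cons_append, List.cons.injEq] at heq
      exact absurd (heq.1 ▸ (List.mem_cons_self : z ∈ z :: t)) h1
    | cons z' t' =>
      simp only [List.cons_append, List.cons.injEq] at heq
      obtain ⟨rfl, heq2⟩ := heq
      have := ih heq2 (fun h => h1 (List.mem_cons_of_mem _ h))
        (fun h => h2 (List.mem_cons_of_mem _ h))
      exact ⟨by rw [this.1], this.2⟩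

lemma extend_infix {l s : List V} {x y : V} (h1 : s ++ [x] <:+: l) (h2 : [x, y] <:+: l)
    (hcount : l.count x = 1) : s ++ [x, y] <:+: l := by
  obtain ⟨u, w, huv⟩ := h1
  obtain ⟨u', w', huv'⟩ := h2
  have e1 : (u ++ s) ++ x :: w = l := by rw [← huv]; simp
  have e2 : u' ++ x :: (y :: w') = l := by rw [← huv']; simp
  have hxu : x ∉ u ++ s := by
    intro hmem
    rw [← e1, List.count_append, List.count_cons_self] at hcount
    have := List.count_pos_iff.mpr hmem
    omega
  have hxu' : x ∉ u' := by
    intro hmem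
    rw [← e2, List.count_append, List.count_cons_self] at hcount
    have := List.count_pos_iff.mpr hmem
    omega
  obtain ⟨heq1, heq2⟩ := eq_of_append_cons_eq (e1.trans e2.symm) hxu hxu'
  refine ⟨u, w', ?_⟩
  rw [← e1, heq2]
  simp

end routes

section cap
variable [DecidableEq V]

lemma dem_sum_le (dem : V → ℝ) (depot : V) (hdem0 : dem depot = 0) :
    ∀ (L c : List V), L.Nodup → (∀ x ∈ c, 0 ≤ dem x) →
      (∀ x ∈ L, x = depot ∨ x ∈ c) → (L.map dem).sum ≤ (c.map dem).sum := by
  intro L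
  induction L with
  | nil =>
    intro c _ hc _
    simp only [List.map_nil, List.sum_nil]
    apply List.sum_nonneg
    intro x hx
    obtain ⟨y, hy, rfl⟩ := List.mem_map.mp hx
    exact hc y hy
  | cons x L ih =>
    intro c hnd hc hmem
    rcases hmem x List.mem_cons_self with rfl | hxc
    · simp only [List.map_cons, List.sum_cons, hdem0, zero_add]
      exact ih c hnd.of_cons hc (fun y hy => hmem y (List.mem_cons_of_mem _ hy))
    · have hperm := List.perm_cons_erase hxc
      have hsum : (c.map dem).sum = dem x + ((c.erase x).map dem).sum := by
        rw [(hperm.map dem).sum_eq]; simp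
      rw [List.map_cons, List.sum_cons, hsum]
      apply add_le_add le_rfl
      apply ih (c.erase x) hnd.of_cons
        (fun y hy => hc y (List.mem_of_mem_erase hy))
      intro y hy
      rcases hmem y (List.mem_cons_of_mem _ hy) with rfl | hyc
      · exact Or.inl rfl
      · refine Or.inr ((List.mem_erase_of_ne ?_).mpr hyc)
        intro hyx
        exact (List.nodup_cons.mp hnd).1 (hyx ▸ hy)

lemma cap_contra (dem : V → ℝ) (Qcap : ℝ) (depot : V) (hdem0 : dem depot = 0)
    (hpos : ∀ u : V, u ≠ depot → 0 < dem u) (c : List V) (hcdep : depot ∉ c)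
    (hcapc : (c.map dem).sum ≤ Qcap) (L : List V) (hnd : L.Nodup)
    (hsub : ∀ x ∈ L, x ∈ depot :: c ++ [depot])
    (hover : Qcap < (L.map dem).sum) : False := by
  have hle : (L.map dem).sum ≤ (c.map dem).sum := by
    apply dem_sum_le dem depot hdem0 L c hnd
    · intro x hx
      exact (hpos x (fun h => hcdep (h ▸ hx))).le
    · intro x hx
      rcases List.mem_cons.mp (hsub x hx) with h | h
      · exact Or.inl h
      · rcases List.mem_append.mp h with h2 | h2
        · exact Or.inr h2
        · exact Or.inl (List.mem_singleton.mp h2)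
  linarith

end cap

/-- Arc flow of a set of selected routes: the number of selected routes using arc `a`. -/
def flow [DecidableEq V] (depot : V) (routes : List (List V)) (a : V × V) : ℤ :=
  (routes.map (fun c => ((arcsOf (depot :: c ++ [depot])).count a : ℤ))).sum

/-- The node list `[v 1, …, v p]` of an indexed path. -/
def pathList (v : ℕ → V) (p : ℕ) : List V := (List.range p).map (fun i => v (i + 1))

/-- Forward elementarity lifting set `Δ^{E,+}_h(P)`. -/
def deltaE (depot : V) (v : ℕ → V) (h : ℕ) : Set (V × V) :=
  {a | ∃ j, 1 ≤ j ∧ j ≤ h - 1 ∧ a = (v h, v j) ∧ v j ≠ depot}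

/-- Forward TSP-optimality lifting set `Δ^{TSP,+}_h(P)`. -/
def deltaTSP (d : V → V → ℝ) (v : ℕ → V) (h : ℕ) : Set (V × V) :=
  {a | ∃ j : V, (∀ i, 1 ≤ i → i ≤ h + 1 → j ≠ v i) ∧ a = (v h, j) ∧
    TSPviolating d (pathList v h ++ [j])}

/-- Forward capacity lifting set `Δ^{Q,+}_h(P)`. -/
def deltaQ (dem : V → ℝ) (Qcap : ℝ) (v : ℕ → V) (h : ℕ) : Set (V × V) :=
  {a | ∃ j : V, (∀ i, 1 ≤ i → i ≤ h + 1 → j ≠ v i) ∧ a = (v h, j) ∧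
    Qcap < (∑ i ∈ Finset.Icc 1 h, dem (v i)) + dem j}

lemma pathList_succ (v : ℕ → V) (k : ℕ) :
    pathList v (k + 1) = pathList v k ++ [v (k + 1)] := by
  simp [pathList, List.range_succ]

lemma pathList_one (v : ℕ → V) : pathList v 1 = [v 1] := rfl

lemma mem_pathList (v : ℕ → V) {k i : ℕ} (h1 : 1 ≤ i) (h2 : i ≤ k) :
    v i ∈ pathList v k := by
  simp only [pathList, List.mem_map, List.mem_range]
  exact ⟨i - 1, by omega, by congr 1; omega⟩

lemma pathList_map_sum (v : ℕ → V) (f : V → ℝ) (k : ℕ) :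
    ((pathList v k).map f).sum = ∑ i ∈ Finset.Icc 1 k, f (v i) := by
  induction k with
  | zero => simp [pathList]
  | succ k ih =>
    rw [pathList_succ, List.map_append, List.sum_append, ih]
    rw [show Finset.Icc 1 (k+1) = insert (k+1) (Finset.Icc 1 k) by
      ext i; simp [Finset.mem_Icc, Finset.mem_insert]; omega]
    rw [Finset.sum_insert (by simp [Finset.mem_Icc])]
    simp [add_comm]

lemma mem_tour_elim {depot x : V} {c : List V} (h : x ∈ depot :: c ++ [depot]) :
    x = depot ∨ x ∈ c := by
  rcases List.mem_cons.mp h with h | h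
  · exact Or.inl h
  · rcases List.mem_append.mp h with h | h
    · exact Or.inr h
    · exact Or.inl (List.mem_singleton.mp h)

/-- the forward-lifted TSP-optimality cut
`x(A(P)) + x(∪_{h=1}^{p-1} Δ⁺_h(P)) ≤ |A(P)| - 1` is valid for every feasible
solution of F-CVRP-TSP, for every TSP-violating path `P` with no depot as
intermediate node. -/
theorem forward_lifted_cut_valid [DecidableEq V]
    (d : V → V → ℝ) (depot : V) (dem : V → ℝ) (Qcap : ℝ)
    (hdem0 : dem depot = 0) (hpos : ∀ u : V, u ≠ depot → 0 < dem u)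
    (routes : List (List V))
    (hnd : ∀ c ∈ routes, c.Nodup) (hdep : ∀ c ∈ routes, depot ∉ c)
    (hne : ∀ c ∈ routes, c ≠ [])
    (hcap : ∀ c ∈ routes, (c.map dem).sum ≤ Qcap)
    (hcover : ∀ u : V, u ≠ depot → (routes.map (fun c => (c.count u : ℤ))).sum = 1)
    (hopt : ∀ c ∈ routes, TSPopt d depot c)
    (p : ℕ) (hp : 2 ≤ p) (v : ℕ → V)
    (hinj : ∀ i j, 1 ≤ i → i ≤ p → 1 ≤ j → j ≤ p → v i = v j → i = j)
    (hmid : ∀ i, 2 ≤ i → i ≤ p - 1 → v i ≠ depot)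
    (hviol : TSPviolating d (pathList v p)) :
    (∑ h ∈ Finset.Icc 1 (p - 1), flow depot routes (v h, v (h + 1)))
      + (∑ᶠ a ∈ (⋃ h ∈ Set.Icc 1 (p - 1),
            (deltaE depot v h ∪ deltaTSP d v h ∪ deltaQ dem Qcap v h)),
          flow depot routes a)
      ≤ (p : ℤ) - 2 := by
  classical
  -- dismiss p = 2
  rcases Nat.eq_or_lt_of_le hp with hp2 | hp3
  · exfalso
    have : pathList v p = [v 1, v 2] := by
      rw [← hp2]
      rw [show (2:ℕ) = 1 + 1 from rfl, pathList_succ, pathList_one]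
      rfl
    rw [this] at hviol
    exact pair_not_viol d _ _ hviol
  -- setup
  have hp3 : 3 ≤ p := hp3
  set U : Set (V × V) := ⋃ h ∈ Set.Icc 1 (p - 1),
      (deltaE depot v h ∪ deltaTSP d v h ∪ deltaQ dem Qcap v h) with hU
  -- elimination principle for U
  have hU_elim : ∀ a : V × V, a ∈ U → ∃ h, 1 ≤ h ∧ h ≤ p - 1 ∧ a.1 = v h ∧
      ((∃ j, 1 ≤ j ∧ j ≤ h - 1 ∧ a.2 = v j ∧ v j ≠ depot) ∨
       ((∀ i, 1 ≤ i → i ≤ h + 1 → a.2 ≠ v i) ∧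
         (TSPviolating d (pathList v h ++ [a.2]) ∨
          Qcap < (∑ i ∈ Finset.Icc 1 h, dem (v i)) + dem a.2))) := by
    intro a ha
    rw [hU] at ha
    simp only [Set.mem_iUnion, Set.mem_Icc] at ha
    obtain ⟨h, ⟨hh1, hh2⟩, ha⟩ := ha
    refine ⟨h, hh1, hh2, ?_⟩
    rcases ha with (ha | ha) | ha
    · obtain ⟨j, hj1, hj2, rfl, hjd⟩ := ha
      exact ⟨rfl, Or.inl ⟨j, hj1, hj2, rfl, hjd⟩⟩
    · obtain ⟨j, hji, rfl, hjv⟩ := ha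
      exact ⟨rfl, Or.inr ⟨fun i h1 h2 => hji i h1 h2, Or.inl hjv⟩⟩
    · obtain ⟨j, hji, rfl, hjv⟩ := ha
      exact ⟨rfl, Or.inr ⟨fun i h1 h2 => hji i h1 h2, Or.inr hjv⟩⟩
  -- flow basics
  have hflow_nonneg : ∀ a, 0 ≤ flow depot routes a := by
    intro a
    apply List.sum_nonneg
    intro x hx
    obtain ⟨cc, _, rfl⟩ := List.mem_map.mp hx
    exact Int.natCast_nonneg _
  set F : Finset (V × V) :=
    ((routes.map (fun c => arcsOf (depot :: c ++ [depot]))).flatten).toFinset with hF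
  have hflow_supp : ∀ a, flow depot routes a ≠ 0 → a ∈ F := by
    intro a hfa
    by_contra hmem
    apply hfa
    apply List.sum_eq_zero
    intro x hx
    obtain ⟨cc, hcc, rfl⟩ := List.mem_map.mp hx
    have : a ∉ arcsOf (depot :: cc ++ [depot]) := by
      intro hmem2
      apply hmem
      rw [hF, List.mem_toFinset]
      exact List.mem_flatten.mpr ⟨_, List.mem_map_of_mem hcc, hmem2⟩
    rw [List.count_eq_zero.mpr this, Nat.cast_zero]
  have harc_mem : ∀ a : V × V, 1 ≤ flow depot routes a →
      ∃ c ∈ routes, a ∈ arcsOf (depot :: c ++ [depot]) := by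
    intro a ha
    obtain ⟨c, hc, h1⟩ := exists_one_le_of_sum_pos
      (f := fun c => ((arcsOf (depot :: c ++ [depot])).count a : ℤ))
      (fun x _ => Int.natCast_nonneg _) ha
    refine ⟨c, hc, ?_⟩
    rw [← List.count_pos_iff]
    exact_mod_cast h1
  set T : Finset (V × V) := F.filter (fun a => a ∈ U) with hT
  have hfinsum : (∑ᶠ a ∈ U, flow depot routes a) = ∑ a ∈ T, flow depot routes a := by
    apply finsum_mem_eq_sum_of_inter_support_eq
    ext a
    simp only [Set.mem_inter_iff, Function.mem_support, hT, Finset.coe_filter,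
      Set.mem_setOf_eq]
    constructor
    · rintro ⟨h1, h2⟩
      exact ⟨⟨hflow_supp a h2, h1⟩, h2⟩
    · rintro ⟨⟨_, h1⟩, h2⟩
      exact ⟨h1, h2⟩
  set PA : Finset (V × V) :=
    (Finset.Icc 1 (p - 1)).image (fun h => (v h, v (h + 1))) with hPA
  have hsumPA : (∑ h ∈ Finset.Icc 1 (p - 1), flow depot routes (v h, v (h + 1)))
      = ∑ a ∈ PA, flow depot routes a := by
    rw [hPA, Finset.sum_image]
    intro i hi j hj hij
    rw [Finset.mem_coe, Finset.mem_Icc] at hi hj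
    rw [Prod.mk.injEq] at hij
    exact hinj i j hi.1 (by omega) hj.1 (by omega) hij.1
  have hdisjPAT : Disjoint PA T := by
    rw [Finset.disjoint_left]
    intro a haPA haT
    have haU : a ∈ U := (Finset.mem_filter.mp haT).2
    obtain ⟨h', h1', h2', htail, hcase⟩ := hU_elim a haU
    rw [hPA, Finset.mem_image] at haPA
    obtain ⟨h, hh, rfl⟩ := haPA
    rw [Finset.mem_Icc] at hh
    obtain rfl : h = h' := hinj h h' hh.1 (by omega) h1' (by omega) htail
    rcases hcase with ⟨j, hj1, hj2, hje, -⟩ | ⟨hne2, -⟩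
    · have : h + 1 = j := hinj (h + 1) j (by omega) (by omega) hj1 (by omega) hje
      omega
    · exact hne2 (h + 1) (by omega) le_rfl rfl
  set C : Finset (V × V) := PA ∪ T with hC
  have hC_elim : ∀ a ∈ C, ∃ h, 1 ≤ h ∧ h ≤ p - 1 ∧ a.1 = v h := by
    intro a haC
    rcases Finset.mem_union.mp haC with ha | ha
    · rw [hPA, Finset.mem_image] at ha
      obtain ⟨h, hh, rfl⟩ := ha
      rw [Finset.mem_Icc] at hh
      exact ⟨h, hh.1, hh.2, rfl⟩
    · obtain ⟨h, h1, h2, h3, -⟩ := hU_elim a (Finset.mem_filter.mp ha).2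
      exact ⟨h, h1, h2, h3⟩
  set Ch : ℕ → Finset (V × V) := fun h => C.filter (fun a => a.1 = v h) with hCh
  have hbiU : C = (Finset.Icc 1 (p - 1)).biUnion Ch := by
    ext a
    simp only [Finset.mem_biUnion, hCh, Finset.mem_filter, Finset.mem_Icc]
    constructor
    · intro ha
      obtain ⟨h, h1, h2, h3⟩ := hC_elim a ha
      exact ⟨h, ⟨h1, h2⟩, ha, h3⟩
    · rintro ⟨h, -, ha, -⟩
      exact ha
  set m : ℕ → ℤ := fun h => ∑ a ∈ Ch h, flow depot routes a with hm
  have hLHS : (∑ h ∈ Finset.Icc 1 (p - 1), flow depot routes (v h, v (h + 1)))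
      + (∑ᶠ a ∈ U, flow depot routes a) = ∑ h ∈ Finset.Icc 1 (p - 1), m h := by
    rw [hsumPA, hfinsum, ← Finset.sum_union hdisjPAT, ← hC, hbiU]
    apply Finset.sum_biUnion
    intro h1 hh1 h2 hh2 hne12
    simp only [Finset.coe_Icc, Set.mem_Icc] at hh1 hh2
    simp only [Function.onFun]
    rw [Finset.disjoint_left]
    intro a ha1 ha2
    rw [hCh] at ha1 ha2
    simp only [Finset.mem_filter] at ha1 ha2
    exact hne12 (hinj h1 h2 hh1.1 (by omega) hh2.1 (by omega) (ha1.2.symm ▸ ha2.2 ▸ rfl))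
  -- uniqueness of the covering route
  have huniq : ∀ u : V, u ≠ depot → ∀ c ∈ routes, ∀ c' ∈ routes,
      u ∈ c → u ∈ c' → c = c' := by
    intro u hu c hc c' hc' huc huc'
    by_contra hne2
    have h2 := two_le_sum (l := routes) (f := fun c => (c.count u : ℤ))
      (fun x _ => Int.natCast_nonneg _) hc hc' hne2
    rw [hcover u hu] at h2
    have h3 : 1 ≤ (c.count u : ℤ) := by exact_mod_cast List.count_pos_iff.mpr huc
    have h4 : 1 ≤ (c'.count u : ℤ) := by exact_mod_cast List.count_pos_iff.mpr huc'
    omega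
  have hdropLast : ∀ c : List V, (depot :: c ++ [depot]).dropLast = depot :: c := by
    intro c
    rw [show depot :: c ++ [depot] = (depot :: c) ++ [depot] from rfl,
      List.dropLast_concat]
  -- m h ≤ 1 whenever v h is not the depot
  have hm_le : ∀ h, v h ≠ depot → m h ≤ 1 := by
    intro h hvd
    have hsub : ∀ a ∈ Ch h, a.1 = v h := fun a ha => by
      have := (Finset.mem_filter.mp ha).2
      simpa using this
    have hswap : m h = (routes.map (fun c => ∑ a ∈ Ch h,
        ((arcsOf (depot :: c ++ [depot])).count a : ℤ))).sum := by
      rw [hm]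
      simp only [flow]
      exact sum_finset_list_swap _ _ _
    rw [hswap, ← hcover (v h) hvd]
    apply List.sum_le_sum
    intro c hc
    show (∑ a ∈ Ch h, ((arcsOf (depot :: c ++ [depot])).count a : ℤ)) ≤ (c.count (v h) : ℤ)
    rw [sum_count_eq (arcsOf (depot :: c ++ [depot])) (Ch h)]
    have step1 : ((arcsOf (depot :: c ++ [depot])).countP (fun x => decide (x ∈ Ch h)))
        ≤ (arcsOf (depot :: c ++ [depot])).countP (fun a => decide (a.1 = v h)) := by
      apply List.countP_mono_left
      intro x _ hpx
      simp only [decide_eq_true_eq] at hpx ⊢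
      exact hsub x hpx
    have step2 : (arcsOf (depot :: c ++ [depot])).countP (fun a => decide (a.1 = v h))
        = ((arcsOf (depot :: c ++ [depot])).map Prod.fst).count (v h) :=
      countP_fst_eq_count _
    have step3 : (((arcsOf (depot :: c ++ [depot])).map Prod.fst).count (v h))
        = c.count (v h) := by
      rw [map_fst_arcsOf, hdropLast c, List.count_cons]
      have hvd' : ¬ (depot = v h) := fun h' => hvd h'.symm
      simp [beq_iff_eq, hvd']
    have := step1.trans_eq (step2.trans step3)
    exact_mod_cast this
  have hm_nonneg : ∀ h, 0 ≤ m h :=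
    fun h => Finset.sum_nonneg (fun a _ => hflow_nonneg a)
  -- single-arc flow bound via arc heads
  have hflow_single : ∀ x y : V, y ≠ depot → flow depot routes (x, y) ≤ 1 := by
    intro x y hy
    rw [← hcover y hy]
    apply List.sum_le_sum
    intro c hc
    show ((arcsOf (depot :: c ++ [depot])).count (x, y) : ℤ) ≤ (c.count y : ℤ)
    have s1 : (arcsOf (depot :: c ++ [depot])).count (x, y)
        ≤ (arcsOf (depot :: c ++ [depot])).countP (fun a => decide (a.2 = y)) := by
      rw [List.count_eq_countP]
      apply List.countP_mono_left
      intro a _ hpa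
      simp only [beq_iff_eq] at hpa
      simp [hpa]
    have s2 : (arcsOf (depot :: c ++ [depot])).countP (fun a => decide (a.2 = y))
        = (((arcsOf (depot :: c ++ [depot])).map Prod.snd).count y) :=
      countP_snd_eq_count _
    have s3 : (((arcsOf (depot :: c ++ [depot])).map Prod.snd).count y)
        = c.count y := by
      rw [map_snd_arcsOf]
      show (c ++ [depot]).count y = c.count y
      rw [List.count_append, List.count_singleton]
      have hy' : ¬ (depot = y) := fun h' => hy h'.symm
      simp [beq_iff_eq, hy']
    have := s1.trans_eq (s2.trans s3)
    exact_mod_cast this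
  -- nodup of path lists
  have hpath_nodup : ∀ h, h ≤ p → (pathList v h).Nodup := by
    intro h hh
    apply List.Nodup.map_on ?_ List.nodup_range
    intro i hi j hj hij
    rw [List.mem_range] at hi hj
    have := hinj (i + 1) (j + 1) (by omega) (by omega) (by omega) (by omega) hij
    omega
  -- elimination for members of `Ch h`
  have hCh_mem_elim : ∀ h, 1 ≤ h → h ≤ p - 1 → ∀ a ∈ Ch h, a.1 = v h ∧
      (a.2 = v (h + 1) ∨
        (∃ j, 1 ≤ j ∧ j ≤ h - 1 ∧ a.2 = v j ∧ v j ≠ depot) ∨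
        ((∀ i, 1 ≤ i → i ≤ h + 1 → a.2 ≠ v i) ∧
          (TSPviolating d (pathList v h ++ [a.2]) ∨
            Qcap < (∑ i ∈ Finset.Icc 1 h, dem (v i)) + dem a.2))) := by
    intro h h1 h2 a ha
    rw [hCh] at ha
    simp only [Finset.mem_filter] at ha
    obtain ⟨haC, hfst⟩ := ha
    refine ⟨hfst, ?_⟩
    rcases Finset.mem_union.mp haC with hamem | hamem
    · rw [hPA, Finset.mem_image] at hamem
      obtain ⟨h'', hh'', heq⟩ := hamem
      rw [Finset.mem_Icc] at hh''
      subst heq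
      obtain rfl : h'' = h :=
        hinj h'' h hh''.1 (by omega) h1 (by omega) hfst
      exact Or.inl rfl
    · obtain ⟨h', h1', h2', htail, hcase⟩ :=
        hU_elim a (Finset.mem_filter.mp hamem).2
      obtain rfl : h' = h :=
        hinj h' h h1' (by omega) h1 (by omega) (htail ▸ hfst)
      exact Or.inr hcase
  -- killers for the three lifting cases, given an infix in some tour
  have hQkill : ∀ h, 1 ≤ h → h ≤ p - 1 → ∀ (w : V) (c : List V), c ∈ routes →
      (pathList v h ++ [w]) <:+: (depot :: c ++ [depot]) →
      (∀ i, 1 ≤ i → i ≤ h + 1 → w ≠ v i) →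
      Qcap < (∑ i ∈ Finset.Icc 1 h, dem (v i)) + dem w → False := by
    intro h h1 h2 w c hc hinf hwne hover
    apply cap_contra dem Qcap depot hdem0 hpos c (hdep c hc) (hcap c hc)
      (pathList v h ++ [w])
    · rw [List.nodup_append]
      refine ⟨hpath_nodup h (by omega), List.nodup_singleton w, ?_⟩
      intro x hx y hy hxy
      rw [List.mem_singleton] at hy
      subst hy
      subst hxy
      simp only [pathList, List.mem_map, List.mem_range] at hx
      obtain ⟨i, hi, hieq⟩ := hx
      exact hwne (i + 1) (by omega) (by omega) hieq.symm
    · exact fun x hx => hinf.subset hx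
    · rw [List.map_append, List.sum_append, pathList_map_sum]
      simpa using hover
  have hTSPkill : ∀ (w : V) (c : List V) (hh : ℕ), c ∈ routes →
      (pathList v hh ++ [w]) <:+: (depot :: c ++ [depot]) →
      TSPviolating d (pathList v hh ++ [w]) → False := by
    intro w c hh hc hinf hv2
    exact not_viol_of_infix d depot c (hopt c hc) hinf hv2
  have hEkill : ∀ h, 1 ≤ h → h ≤ p - 1 → ∀ j, 1 ≤ j → j ≤ h - 1 →
      ∀ c ∈ routes, (pathList v h ++ [v j]) <:+: (depot :: c ++ [depot]) →
      v j ≠ depot → False := by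
    intro h h1 h2 j hj1 hj2 c hc hinf hjd
    have hcnt2 : 2 ≤ (pathList v h ++ [v j]).count (v j) := by
      rw [List.count_append, List.count_singleton]
      have hmem := mem_pathList v hj1 (by omega : j ≤ h)
      have := List.count_pos_iff.mpr hmem
      simp only [beq_self_eq_true, if_pos]
      omega
    have hle1 := hinf.sublist.count_le (v j)
    have hle2 : (depot :: c ++ [depot]).count (v j) ≤ 1 := by
      rw [count_tour depot c hjd]
      exact List.nodup_iff_count_le_one.mp (hnd c hc) (v j)
    omega
  -- arc membership gives an infix
  have harc_infix : ∀ (a : V × V) (c : List V),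
      a ∈ arcsOf (depot :: c ++ [depot]) →
      [a.1, a.2] <:+: (depot :: c ++ [depot]) := by
    intro a c hmem
    rw [← mem_arcsOf_iff_infix]
    simpa using hmem
  -- special bound on `m 1` when the path starts at the depot
  have hm1_dep : v 1 = depot → m 1 ≤ 1 := by
    intro hv1
    have hkey : ∀ a ∈ Ch 1, a = (v 1, v 2) ∨ flow depot routes a = 0 := by
      intro a ha
      obtain ⟨hfst, hcase⟩ := hCh_mem_elim 1 le_rfl (by omega) a ha
      rcases hcase with h2 | h2 | ⟨hwne, h2 | h2⟩
      · exact Or.inl (Prod.ext hfst h2)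
      · obtain ⟨j, hj1, hj2, -, -⟩ := h2; omega
      · exfalso
        rw [pathList_one] at h2
        exact pair_not_viol d (v 1) a.2 h2
      · right
        by_contra hfz
        have h1f : 1 ≤ flow depot routes a := by
          have := hflow_nonneg a; omega
        obtain ⟨c, hc, hmemarc⟩ := harc_mem a h1f
        have hinfix : [v 1, a.2] <:+: (depot :: c ++ [depot]) := by
          have := harc_infix a c hmemarc
          rwa [hfst] at this
        exact hQkill 1 le_rfl (by omega) a.2 c hc
          (by rw [pathList_one]; exact hinfix) hwne h2
    have hb1 : m 1 ≤ ∑ a ∈ Ch 1, (if (v 1, v 2) = a then flow depot routes a else 0) := by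
      rw [hm]
      apply Finset.sum_le_sum
      intro a ha
      rcases hkey a ha with rfl | hz
      · simp
      · simp [hz]
    have hb2 : (∑ a ∈ Ch 1, (if (v 1, v 2) = a then flow depot routes a else 0))
        ≤ flow depot routes (v 1, v 2) := by
      rw [Finset.sum_ite_eq]
      split
      · exact le_rfl
      · exact hflow_nonneg _
    have hb3 := hflow_single (v 1) (v 2) (hmid 2 le_rfl (by omega))
    omega
  have hm_le_all : ∀ h ∈ Finset.Icc 1 (p - 1), m h ≤ 1 := by
    intro h hh
    rw [Finset.mem_Icc] at hh
    rcases Nat.eq_or_lt_of_le hh.1 with h1 | h1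
    · by_cases hv1 : v 1 = depot
      · rw [← h1]; exact hm1_dep hv1
      · exact hm_le h (h1 ▸ hv1)
    · exact hm_le h (hmid h (by omega) hh.2)
  -- some h₀ has no flow at all
  have hmissing : ∃ h₀ ∈ Finset.Icc 1 (p - 1), m h₀ ≤ 0 := by
    by_contra hcon
    push_neg at hcon
    have hwit : ∀ h, 1 ≤ h → h ≤ p - 1 → ∃ (w : V) (c : List V), c ∈ routes ∧
        [v h, w] <:+: (depot :: c ++ [depot]) ∧
        (w = v (h + 1) ∨
          (∃ j, 1 ≤ j ∧ j ≤ h - 1 ∧ w = v j ∧ v j ≠ depot) ∨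
          ((∀ i, 1 ≤ i → i ≤ h + 1 → w ≠ v i) ∧
            (TSPviolating d (pathList v h ++ [w]) ∨
              Qcap < (∑ i ∈ Finset.Icc 1 h, dem (v i)) + dem w))) := by
      intro h h1 h2
      have hpos1 : 0 < m h := hcon h (Finset.mem_Icc.mpr ⟨h1, h2⟩)
      have hlt : ∑ _a ∈ Ch h, (0:ℤ) < ∑ a ∈ Ch h, flow depot routes a := by
        rw [Finset.sum_const_zero]
        rw [hm] at hpos1
        exact hpos1
      obtain ⟨a, ha, hfa⟩ := Finset.exists_lt_of_sum_lt hlt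
      have h1f : 1 ≤ flow depot routes a := by omega
      obtain ⟨c, hc, harcm⟩ := harc_mem a h1f
      obtain ⟨hfst, hcase⟩ := hCh_mem_elim h h1 h2 a ha
      refine ⟨a.2, c, hc, ?_, hcase⟩
      have := harc_infix a c harcm
      rwa [hfst] at this
    have chain : ∀ k, 1 ≤ k → k ≤ p →
        ∃ c ∈ routes, pathList v k <:+: (depot :: c ++ [depot]) := by
      intro k
      induction k with
      | zero => omega
      | succ k ih =>
        intro hk1 hk2
        rcases Nat.eq_or_lt_of_le hk1 with h1 | h1
        · obtain ⟨w, c, hc, hinfix, -⟩ := hwit 1 le_rfl (by omega)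
          refine ⟨c, hc, ?_⟩
          rw [← h1, pathList_one]
          exact (List.IsPrefix.isInfix ⟨[w], rfl⟩).trans hinfix
        · have hk0 : 1 ≤ k := by omega
          obtain ⟨c, hc, hinfix⟩ := ih hk0 (by omega)
          obtain ⟨w, c', hc', hinfix', hcase⟩ := hwit k hk0 (by omega)
          have hcomb : ∃ c'' ∈ routes,
              (pathList v k ++ [w]) <:+: (depot :: c'' ++ [depot]) := by
            rcases Nat.eq_or_lt_of_le hk0 with h1' | h1'
            · obtain rfl : k = 1 := h1'.symm
              refine ⟨c', hc', ?_⟩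
              rw [pathList_one]
              exact hinfix'
            · have hvk : v k ≠ depot := hmid k (by omega) (by omega)
              have hvkc : v k ∈ c := by
                have hmem := hinfix.subset (mem_pathList v hk0 le_rfl)
                rcases mem_tour_elim hmem with h | h
                · exact absurd h hvk
                · exact h
              have hvkc' : v k ∈ c' := by
                have hmem := hinfix'.subset List.mem_cons_self
                rcases mem_tour_elim hmem with h | h
                · exact absurd h hvk
                · exact h
              obtain rfl : c = c' := huniq (v k) hvk c hc c' hc' hvkc hvkc'
              refine ⟨c, hc, ?_⟩
              have hcnt : (depot :: c ++ [depot]).count (v k) = 1 := by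
                rw [count_tour depot c hvk]
                exact List.count_eq_one_of_mem (hnd c hc) hvkc
              have hsplit : pathList v k = pathList v (k - 1) ++ [v k] := by
                have hkk : k - 1 + 1 = k := by omega
                conv_lhs => rw [← hkk]
                rw [pathList_succ, hkk]
              rw [hsplit] at hinfix
              have hext := extend_infix hinfix hinfix' hcnt
              rw [hsplit, List.append_assoc]
              exact hext
          obtain ⟨c'', hc'', hcomb⟩ := hcomb
          rcases hcase with rfl | hE | ⟨hwne, hTSP | hQ⟩
          · refine ⟨c'', hc'', ?_⟩
            rw [pathList_succ]
            exact hcomb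
          · obtain ⟨j, hj1, hj2, rfl, hjd⟩ := hE
            exact (hEkill k hk0 (by omega) j hj1 hj2 c'' hc'' hcomb hjd).elim
          · exact (hTSPkill w c'' k hc'' hcomb hTSP).elim
          · exact (hQkill k hk0 (by omega) w c'' hc'' hcomb hwne hQ).elim
    obtain ⟨c, hc, hfin⟩ := chain p (by omega) le_rfl
    exact not_viol_of_infix d depot c (hopt c hc) hfin hviol
  obtain ⟨h₀, hh₀, hm0⟩ := hmissing
  rw [hLHS]
  calc ∑ h ∈ Finset.Icc 1 (p - 1), m h
      = m h₀ + ∑ h ∈ (Finset.Icc 1 (p - 1)).erase h₀, m h :=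
        (Finset.add_sum_erase _ _ hh₀).symm
    _ ≤ 0 + (((Finset.Icc 1 (p - 1)).erase h₀).card : ℤ) := by
        apply add_le_add hm0
        have hsb := Finset.sum_le_card_nsmul ((Finset.Icc 1 (p - 1)).erase h₀) m 1
          (fun h hh => hm_le_all h (Finset.mem_of_mem_erase hh))
        simpa using hsb
    _ ≤ (p:ℤ) - 2 := by
        rw [Finset.card_erase_of_mem hh₀, Nat.card_Icc]
        omega
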